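/- Let n ≥ 0, m ∈ ℤ and let (f_0, …, f_n) be a cocycle system of depth n and weight m. Then for every real matrix A ∈ GL⁺(2,ℝ) and every B ∈ SL(2,ℤ), one has (f||_m A)(z) = (f||_m (BA))(z) for all z ∈ ℍ. -/

import Mathlib

open Complex Finset

/-- A cocycle system of depth `n` and weight `m`: a tuple `(f 0, …, f n)` of holomorphic
functions on the upper half plane satisfying the defining transformation rule under
`SL(2,ℤ)`. -/
def IsCocycleSystem (n : ℕ) (m : ℤ) (f : ℕ → ℂ → ℂ) : Prop :=
  (∀ i ≤ n, DifferentiableOn ℂ (f i) {z : ℂ | 0 < z.im}) ∧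
  ∀ A : Matrix (Fin 2) (Fin 2) ℤ, A.det = 1 → ∀ i ≤ n, ∀ z : ℂ, 0 < z.im →
    f i (((A 0 0 : ℂ) * z + (A 0 1 : ℂ)) / ((A 1 0 : ℂ) * z + (A 1 1 : ℂ))) =
      ∑ j ∈ Finset.range (n - i + 1),
        ((n - i).choose j : ℂ) * (A 1 0 : ℂ) ^ j *
          ((A 1 0 : ℂ) * z + (A 1 1 : ℂ)) ^ (m - 2 * (i : ℤ) - (j : ℤ)) * f (i + j) z

/-- The double slash operator `(f‖_m A)(z)` for a cocycle system and `A ∈ GL⁺(2,ℝ)`. -/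
noncomputable def dslash (n : ℕ) (m : ℤ) (f : ℕ → ℂ → ℂ)
    (A : Matrix (Fin 2) (Fin 2) ℝ) (z : ℂ) : ℂ :=
  ((A.det : ℂ)) ^ (m - (n : ℤ) - 1) *
    ∑ i ∈ Finset.range (n + 1),
      (n.choose i : ℂ) * (-(A 1 0 : ℂ) / (A.det : ℂ)) ^ i *
        ((A 1 0 : ℂ) * z + (A 1 1 : ℂ)) ^ ((i : ℤ) - m) *
        f i (((A 0 0 : ℂ) * z + (A 0 1 : ℂ)) / ((A 1 0 : ℂ) * z + (A 1 1 : ℂ)))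

/-- for a cocycle system of depth `n` and weight `m`, any `A ∈ GL⁺(2,ℝ)`
and any `B ∈ SL(2,ℤ)`, one has `f‖_m A = f‖_m (BA)` on the upper half plane. -/

lemma denom_ne_zero' {c d : ℝ} (h : c ≠ 0 ∨ d ≠ 0) {z : ℂ} (hz : 0 < z.im) :
    (c : ℂ) * z + d ≠ 0 := by
  intro h0
  have him : c * z.im = 0 := by
    have := congrArg Complex.im h0
    simpa using this
  have hc : c = 0 := by
    rcases mul_eq_zero.1 him with h' | h'
    · exact h'
    · exact absurd h' hz.ne'
  subst hc
  have hd : d = 0 := by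
    have := congrArg Complex.re h0
    simpa using this
  tauto

lemma im_div_pos' {a b c d : ℝ} (hdet : 0 < a * d - b * c) {z : ℂ} (hz : 0 < z.im) :
    0 < (((a : ℂ) * z + b) / ((c : ℂ) * z + d)).im := by
  have hcd : c ≠ 0 ∨ d ≠ 0 := by
    by_contra h; push_neg at h
    rw [h.1, h.2] at hdet; simp at hdet
  have hne := denom_ne_zero' hcd hz
  have him : (((a : ℂ) * z + b) / ((c : ℂ) * z + d)).im
      = (a * d - b * c) * z.im / Complex.normSq ((c : ℂ) * z + d) := by
    rw [Complex.div_im]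
    simp [Complex.normSq_apply]
    ring
  rw [him]
  have hq : 0 < Complex.normSq ((c : ℂ) * z + d) := Complex.normSq_pos.2 hne
  positivity

lemma triangle_swap' {M : Type*} [AddCommMonoid M] (n : ℕ) (g : ℕ → ℕ → M) :
    ∑ i ∈ range (n + 1), ∑ j ∈ range (n - i + 1), g i (i + j)
      = ∑ k ∈ range (n + 1), ∑ i ∈ range (k + 1), g i k := by
  rw [Finset.sum_sigma', Finset.sum_sigma']
  apply Finset.sum_nbij' (fun p => (⟨p.1 + p.2, p.1⟩ : Σ _ : ℕ, ℕ))
    (fun p => (⟨p.2, p.1 - p.2⟩ : Σ _ : ℕ, ℕ))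
  · intro p hp; simp only [Finset.mem_sigma, Finset.mem_range] at hp ⊢; omega
  · intro p hp; simp only [Finset.mem_sigma, Finset.mem_range] at hp ⊢; omega
  · intro p hp; obtain ⟨i, j⟩ := p
    simp only [Finset.mem_sigma, Finset.mem_range] at hp
    simp only [Sigma.mk.inj_iff, heq_eq_eq]
    exact ⟨trivial, by omega⟩
  · intro p hp; obtain ⟨k, i⟩ := p
    simp only [Finset.mem_sigma, Finset.mem_range] at hp
    simp only [Sigma.mk.inj_iff, heq_eq_eq]
    exact ⟨by omega, trivial⟩
  · intro p hp; rfl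

lemma key_sum' (n : ℕ) (m : ℤ) (F : ℕ → ℂ) (c D jA jB γ X : ℂ)
    (hD : D ≠ 0) (hjA : jA ≠ 0) (hjB : jB ≠ 0)
    (hX : X * jA + γ = -c * (jB * jA) / D) :
    ∑ i ∈ range (n + 1), (n.choose i : ℂ) * X ^ i * (jB * jA) ^ ((i : ℤ) - m) *
      ∑ j ∈ range (n - i + 1), ((n - i).choose j : ℂ) * γ ^ j * jB ^ (m - 2 * (i : ℤ) - (j : ℤ)) * F (i + j)
    = ∑ k ∈ range (n + 1), (n.choose k : ℂ) * (-c / D) ^ k * jA ^ ((k : ℤ) - m) * F k := by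
  have step1 : ∀ i, (n.choose i : ℂ) * X ^ i * (jB * jA) ^ ((i : ℤ) - m) *
      ∑ j ∈ range (n - i + 1), ((n - i).choose j : ℂ) * γ ^ j * jB ^ (m - 2 * (i : ℤ) - (j : ℤ)) * F (i + j)
      = ∑ j ∈ range (n - i + 1),
        (fun i k => (n.choose i : ℂ) * X ^ i * (jB * jA) ^ ((i : ℤ) - m) *
          (((n - i).choose (k - i) : ℂ) * γ ^ (k - i) * jB ^ (m - 2 * (i : ℤ) - ((k - i : ℕ) : ℤ)) * F k))
          i (i + j) := by
    intro i
    rw [Finset.mul_sum]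
    refine Finset.sum_congr rfl fun j hj => ?_
    simp only [Nat.add_sub_cancel_left]
    try ring
  simp only [step1]
  have hsw := triangle_swap' n (fun i k => (n.choose i : ℂ) * X ^ i * (jB * jA) ^ ((i : ℤ) - m) *
    (((n - i).choose (k - i) : ℂ) * γ ^ (k - i) * jB ^ (m - 2 * (i : ℤ) - ((k - i : ℕ) : ℤ)) * F k))
  rw [hsw]
  refine Finset.sum_congr rfl fun k hk => ?_
  rw [Finset.mem_range, Nat.lt_succ_iff] at hk
  have ejB : jB ^ (-(k : ℤ)) * jB ^ k = 1 := by
    rw [← zpow_natCast jB k, ← zpow_add₀ hjB]; simp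
  have ejA : jA ^ (-m) * jA ^ k = jA ^ ((k : ℤ) - m) := by
    rw [← zpow_natCast jA k, ← zpow_add₀ hjA]; congr 1; try ring
  calc ∑ i ∈ range (k + 1), (n.choose i : ℂ) * X ^ i * (jB * jA) ^ ((i : ℤ) - m) *
        (((n - i).choose (k - i) : ℂ) * γ ^ (k - i) * jB ^ (m - 2 * (i : ℤ) - ((k - i : ℕ) : ℤ)) * F k)
      = ∑ i ∈ range (k + 1), (n.choose k : ℂ) * jB ^ (-(k : ℤ)) * jA ^ (-m) * F k *
          ((X * jA) ^ i * γ ^ (k - i) * (k.choose i : ℂ)) := by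
        refine Finset.sum_congr rfl fun i hi => ?_
        rw [Finset.mem_range, Nat.lt_succ_iff] at hi
        have hch : ((n.choose i : ℂ)) * ((n - i).choose (k - i) : ℂ)
            = (n.choose k : ℂ) * (k.choose i : ℂ) := by
          exact_mod_cast congrArg (fun t : ℕ => (t : ℂ)) (Nat.choose_mul (n := n) hi).symm
        have e1 : jB ^ ((i : ℤ) - m) * jB ^ (m - 2 * (i : ℤ) - ((k - i : ℕ) : ℤ)) = jB ^ (-(k : ℤ)) := by
          rw [← zpow_add₀ hjB]; congr 1; omega
        have e2 : jA ^ ((i : ℤ) - m) = jA ^ i * jA ^ (-m) := by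
          rw [← zpow_natCast jA i, ← zpow_add₀ hjA]; congr 1; try ring
        calc (n.choose i : ℂ) * X ^ i * (jB * jA) ^ ((i : ℤ) - m) *
              (((n - i).choose (k - i) : ℂ) * γ ^ (k - i) * jB ^ (m - 2 * (i : ℤ) - ((k - i : ℕ) : ℤ)) * F k)
            = ((n.choose i : ℂ) * ((n - i).choose (k - i) : ℂ)) * X ^ i * γ ^ (k - i) * F k *
                (jB ^ ((i : ℤ) - m) * jB ^ (m - 2 * (i : ℤ) - ((k - i : ℕ) : ℤ))) * jA ^ ((i : ℤ) - m) := by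
              rw [mul_zpow]; ring
          _ = ((n.choose k : ℂ) * (k.choose i : ℂ)) * X ^ i * γ ^ (k - i) * F k *
                jB ^ (-(k : ℤ)) * (jA ^ i * jA ^ (-m)) := by rw [hch, e1, e2]
          _ = (n.choose k : ℂ) * jB ^ (-(k : ℤ)) * jA ^ (-m) * F k *
                ((X * jA) ^ i * γ ^ (k - i) * (k.choose i : ℂ)) := by
              rw [mul_pow]; ring
    _ = (n.choose k : ℂ) * jB ^ (-(k : ℤ)) * jA ^ (-m) * F k * (X * jA + γ) ^ k := by
        rw [← Finset.mul_sum, ← add_pow]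
    _ = (n.choose k : ℂ) * jB ^ (-(k : ℤ)) * jA ^ (-m) * F k * ((-c / D) ^ k * jB ^ k * jA ^ k) := by
        rw [hX]
        congr 1
        rw [← mul_pow, ← mul_pow]
        congr 1
        rw [mul_div_right_comm, ← mul_assoc]
    _ = (n.choose k : ℂ) * (-c / D) ^ k * F k * (jB ^ (-(k : ℤ)) * jB ^ k) * (jA ^ (-m) * jA ^ k) := by
        ring
    _ = (n.choose k : ℂ) * (-c / D) ^ k * jA ^ ((k : ℤ) - m) * F k := by
        rw [ejB, ejA]; ring
theorem dslash_left_SL2Z_invariant (n : ℕ) (m : ℤ) (f : ℕ → ℂ → ℂ)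
    (hf : IsCocycleSystem n m f)
    (A : Matrix (Fin 2) (Fin 2) ℝ) (hA : 0 < A.det)
    (B : Matrix (Fin 2) (Fin 2) ℤ) (hB : B.det = 1)
    (z : ℂ) (hz : 0 < z.im) :
    dslash n m f A z = dslash n m f (B.map (Int.cast : ℤ → ℝ) * A) z := by
  obtain ⟨-, hrel⟩ := hf
  have hD : ((A.det : ℝ) : ℂ) ≠ 0 := by
    simp only [ne_eq, Complex.ofReal_eq_zero]; exact hA.ne'
  have hdet2 : A.det = A 0 0 * A 1 1 - A 0 1 * A 1 0 := Matrix.det_fin_two A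
  have hAcd : A 1 0 ≠ 0 ∨ A 1 1 ≠ 0 := by
    by_contra h; push_neg at h
    rw [hdet2, h.1, h.2] at hA; simp at hA
  have hjA : ((A 1 0 : ℝ) : ℂ) * z + ((A 1 1 : ℝ) : ℂ) ≠ 0 := denom_ne_zero' hAcd hz
  have hw : 0 < ((((A 0 0 : ℝ) : ℂ) * z + ((A 0 1 : ℝ) : ℂ)) /
      (((A 1 0 : ℝ) : ℂ) * z + ((A 1 1 : ℝ) : ℂ))).im := by
    refine im_div_pos' ?_ hz
    rw [hdet2] at hA; linarith
  set w : ℂ := (((A 0 0 : ℝ) : ℂ) * z + ((A 0 1 : ℝ) : ℂ)) /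
      (((A 1 0 : ℝ) : ℂ) * z + ((A 1 1 : ℝ) : ℂ)) with hwdef
  have hjB : ((B 1 0 : ℤ) : ℂ) * w + ((B 1 1 : ℤ) : ℂ) ≠ 0 := by
    have hBcd : ((B 1 0 : ℤ) : ℝ) ≠ 0 ∨ ((B 1 1 : ℤ) : ℝ) ≠ 0 := by
      by_contra h; push_neg at h
      have h1 : B 1 0 = 0 := by exact_mod_cast h.1
      have h2 : B 1 1 = 0 := by exact_mod_cast h.2
      rw [Matrix.det_fin_two, h1, h2] at hB; simp at hB
    have := denom_ne_zero' hBcd hw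
    push_cast at this
    exact this
  -- entry lemmas
  have e00 : (((B.map (Int.cast : ℤ → ℝ) * A) 0 0 : ℝ) : ℂ)
      = ((B 0 0 : ℤ) : ℂ) * ((A 0 0 : ℝ) : ℂ) + ((B 0 1 : ℤ) : ℂ) * ((A 1 0 : ℝ) : ℂ) := by
    simp [Matrix.mul_apply, Fin.sum_univ_two, Matrix.map_apply]
  have e01 : (((B.map (Int.cast : ℤ → ℝ) * A) 0 1 : ℝ) : ℂ)
      = ((B 0 0 : ℤ) : ℂ) * ((A 0 1 : ℝ) : ℂ) + ((B 0 1 : ℤ) : ℂ) * ((A 1 1 : ℝ) : ℂ) := by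
    simp [Matrix.mul_apply, Fin.sum_univ_two, Matrix.map_apply]
  have e10 : (((B.map (Int.cast : ℤ → ℝ) * A) 1 0 : ℝ) : ℂ)
      = ((B 1 0 : ℤ) : ℂ) * ((A 0 0 : ℝ) : ℂ) + ((B 1 1 : ℤ) : ℂ) * ((A 1 0 : ℝ) : ℂ) := by
    simp [Matrix.mul_apply, Fin.sum_univ_two, Matrix.map_apply]
  have e11 : (((B.map (Int.cast : ℤ → ℝ) * A) 1 1 : ℝ) : ℂ)
      = ((B 1 0 : ℤ) : ℂ) * ((A 0 1 : ℝ) : ℂ) + ((B 1 1 : ℤ) : ℂ) * ((A 1 1 : ℝ) : ℂ) := by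
    simp [Matrix.mul_apply, Fin.sum_univ_two, Matrix.map_apply]
  have edet : (((B.map (Int.cast : ℤ → ℝ) * A).det : ℝ) : ℂ) = ((A.det : ℝ) : ℂ) := by
    rw [Matrix.det_mul]
    have : (B.map (Int.cast : ℤ → ℝ)).det = ((B.det : ℤ) : ℝ) := by
      rw [Matrix.det_fin_two, Matrix.det_fin_two]
      simp [Matrix.map_apply]
    rw [this, hB]
    simp
  -- the transformed denominator
  have hjBA : (((B 1 0 : ℤ) : ℂ) * ((A 0 0 : ℝ) : ℂ) + ((B 1 1 : ℤ) : ℂ) * ((A 1 0 : ℝ) : ℂ)) * z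
        + (((B 1 0 : ℤ) : ℂ) * ((A 0 1 : ℝ) : ℂ) + ((B 1 1 : ℤ) : ℂ) * ((A 1 1 : ℝ) : ℂ))
      = (((B 1 0 : ℤ) : ℂ) * w + ((B 1 1 : ℤ) : ℂ)) * (((A 1 0 : ℝ) : ℂ) * z + ((A 1 1 : ℝ) : ℂ)) := by
    rw [hwdef]
    field_simp
    ring
  have hjBAne : (((B 1 0 : ℤ) : ℂ) * w + ((B 1 1 : ℤ) : ℂ)) * (((A 1 0 : ℝ) : ℂ) * z + ((A 1 1 : ℝ) : ℂ)) ≠ 0 :=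
    mul_ne_zero hjB hjA
  -- the Möbius argument
  have hnumB : (((B 0 0 : ℤ) : ℂ) * w + ((B 0 1 : ℤ) : ℂ)) * (((A 1 0 : ℝ) : ℂ) * z + ((A 1 1 : ℝ) : ℂ))
      = (((B 0 0 : ℤ) : ℂ) * ((A 0 0 : ℝ) : ℂ) + ((B 0 1 : ℤ) : ℂ) * ((A 1 0 : ℝ) : ℂ)) * z
        + (((B 0 0 : ℤ) : ℂ) * ((A 0 1 : ℝ) : ℂ) + ((B 0 1 : ℤ) : ℂ) * ((A 1 1 : ℝ) : ℂ)) := by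
    rw [hwdef]
    linear_combination ((B 0 0 : ℤ) : ℂ) * div_mul_cancel₀ (((A 0 0 : ℝ) : ℂ) * z + ((A 0 1 : ℝ) : ℂ)) hjA
  have hmoeb : ((((B 0 0 : ℤ) : ℂ) * ((A 0 0 : ℝ) : ℂ) + ((B 0 1 : ℤ) : ℂ) * ((A 1 0 : ℝ) : ℂ)) * z
        + (((B 0 0 : ℤ) : ℂ) * ((A 0 1 : ℝ) : ℂ) + ((B 0 1 : ℤ) : ℂ) * ((A 1 1 : ℝ) : ℂ)))
        / ((((B 1 0 : ℤ) : ℂ) * ((A 0 0 : ℝ) : ℂ) + ((B 1 1 : ℤ) : ℂ) * ((A 1 0 : ℝ) : ℂ)) * z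
        + (((B 1 0 : ℤ) : ℂ) * ((A 0 1 : ℝ) : ℂ) + ((B 1 1 : ℤ) : ℂ) * ((A 1 1 : ℝ) : ℂ)))
      = (((B 0 0 : ℤ) : ℂ) * w + ((B 0 1 : ℤ) : ℂ)) / (((B 1 0 : ℤ) : ℂ) * w + ((B 1 1 : ℤ) : ℂ)) := by
    rw [hjBA, ← hnumB, mul_div_mul_right _ _ hjA]
  rw [dslash, dslash]
  simp only [e00, e01, e10, e11, edet]
  simp only [hmoeb]
  simp only [hjBA]
  congr 1
  have hXkey : (-(((B 1 0 : ℤ) : ℂ) * ((A 0 0 : ℝ) : ℂ) + ((B 1 1 : ℤ) : ℂ) * ((A 1 0 : ℝ) : ℂ))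
        / ((A.det : ℝ) : ℂ)) * (((A 1 0 : ℝ) : ℂ) * z + ((A 1 1 : ℝ) : ℂ)) + ((B 1 0 : ℤ) : ℂ)
      = -((A 1 0 : ℝ) : ℂ) * ((((B 1 0 : ℤ) : ℂ) * w + ((B 1 1 : ℤ) : ℂ))
          * (((A 1 0 : ℝ) : ℂ) * z + ((A 1 1 : ℝ) : ℂ))) / ((A.det : ℝ) : ℂ) := by
    have hdetc : ((A.det : ℝ) : ℂ)
        = ((A 0 0 : ℝ) : ℂ) * ((A 1 1 : ℝ) : ℂ) - ((A 0 1 : ℝ) : ℂ) * ((A 1 0 : ℝ) : ℂ) := by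
      rw [hdet2]; push_cast; ring
    have hDc : ((A 0 0 : ℝ) : ℂ) * ((A 1 1 : ℝ) : ℂ) - ((A 0 1 : ℝ) : ℂ) * ((A 1 0 : ℝ) : ℂ) ≠ 0 := by
      rw [← hdetc]; exact hD
    rw [eq_div_iff hD, hdetc, hwdef]
    linear_combination (-(((B 1 0 : ℤ) : ℂ) * ((A 0 0 : ℝ) : ℂ) + ((B 1 1 : ℤ) : ℂ) * ((A 1 0 : ℝ) : ℂ))
        * (((A 1 0 : ℝ) : ℂ) * z + ((A 1 1 : ℝ) : ℂ))) * inv_mul_cancel₀ hDc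
      + (((A 1 0 : ℝ) : ℂ) * ((B 1 0 : ℤ) : ℂ) * (((A 0 0 : ℝ) : ℂ) * z + ((A 0 1 : ℝ) : ℂ)))
        * inv_mul_cancel₀ hjA
  have := key_sum' n m (fun k => f k w) ((A 1 0 : ℝ) : ℂ) ((A.det : ℝ) : ℂ)
      (((A 1 0 : ℝ) : ℂ) * z + ((A 1 1 : ℝ) : ℂ)) (((B 1 0 : ℤ) : ℂ) * w + ((B 1 1 : ℤ) : ℂ))
      ((B 1 0 : ℤ) : ℂ)
      (-(((B 1 0 : ℤ) : ℂ) * ((A 0 0 : ℝ) : ℂ) + ((B 1 1 : ℤ) : ℂ) * ((A 1 0 : ℝ) : ℂ)) / ((A.det : ℝ) : ℂ))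
      hD hjA hjB hXkey
  rw [← this]
  refine Finset.sum_congr rfl fun i hi => ?_
  rw [Finset.mem_range, Nat.lt_succ_iff] at hi
  rw [hrel B hB i hi w hw]
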